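/- arXiv:2005.02203 — 3 statements merged into one kernel-verified Lean document; each statement's English description precedes it below -/
import Mathlib

section
/- Let $r \geq 1$ and let $(a_j)_{j\in\mathbb{Z}}$ and $(c_j)_{j\in\mathbb{Z}}$ be sequences of complex numbers with all $c_j$ distinct and $a_j \neq c_k$ whenever needed for nonvanishing denominators. Define lower-triangular matrices $f_{nk} = \frac{\prod_{j=k}^{n-1}(a_j - c_k)}{\prod_{j=k+1}^{n}(c_j - c_k)}$ and $g_{kl} = \frac{(a_l - c_l)\prod_{j=l+1}^{k}(a_j - c_k)}{(a_k - c_k)\prod_{j=l}^{k-1}(c_j - c_k)}$ for integers $n \geq k \geq l$ (and $0$ otherwise). Then $f$ and $g$ are mutually inverse: $\sum_{l \leq k \leq n} f_{nk} g_{kl} = \delta_{nl}$ for all integers $n \geq l$. -/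
open Finset Polynomial

/-- Krattenthaler's matrix `f`. -/
noncomputable def fK (a c : ℤ → ℂ) (n k : ℤ) : ℂ :=
  (∏ j ∈ Finset.Ico k n, (a j - c k)) / (∏ j ∈ Finset.Icc (k + 1) n, (c j - c k))

/-- Krattenthaler's matrix `g`. -/
noncomputable def gK (a c : ℤ → ℂ) (k l : ℤ) : ℂ :=
  ((a l - c l) * ∏ j ∈ Finset.Icc (l + 1) k, (a j - c k)) /
    ((a k - c k) * ∏ j ∈ Finset.Ico l k, (c j - c k))

lemma pf_lemma (s : Finset ℤ) (v : ℤ → ℂ) (hvs : Set.InjOn v s)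
    (P : ℂ[X]) (hP : P.degree < (s.card - 1 : ℕ)) :
    ∑ i ∈ s, P.eval (v i) * (∏ j ∈ s.erase i, (v i - v j))⁻¹ = 0 := by
  have hdeg : P.degree < s.card := lt_of_lt_of_le hP (by exact_mod_cast Nat.sub_le s.card 1)
  have hI := Lagrange.eq_interpolate hvs hdeg
  have hb : ∀ i ∈ s, (Lagrange.basis s v i).coeff (s.card - 1)
      = (∏ j ∈ s.erase i, (v i - v j))⁻¹ := by
    intro i hi
    have hnd : (Lagrange.basis s v i).natDegree = s.card - 1 := Lagrange.natDegree_basis hvs hi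
    rw [← hnd, Polynomial.coeff_natDegree]
    have : (Lagrange.basis s v i).leadingCoeff = ∏ j ∈ s.erase i, (v i - v j)⁻¹ := by
      rw [Lagrange.basis, Polynomial.leadingCoeff_prod]
      refine Finset.prod_congr rfl fun j hj => ?_
      rw [Lagrange.basisDivisor, leadingCoeff_mul, leadingCoeff_C, leadingCoeff_X_sub_C, mul_one]
    rw [this, ← Finset.prod_inv_distrib]
  have hcoeff : P.coeff (s.card - 1) = 0 := coeff_eq_zero_of_degree_lt hP
  rw [hI, Lagrange.interpolate_apply, Polynomial.finset_sum_coeff] at hcoeff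
  rw [← hcoeff]
  refine Finset.sum_congr rfl fun i hi => ?_
  rw [coeff_C_mul, hb i hi]

lemma num_prod (x : ℤ → ℂ) (l k n : ℤ) (hlk : l ≤ k) (hkn : k ≤ n) (hln : l < n) :
    (∏ j ∈ Ico k n, x j) * (∏ j ∈ Icc (l+1) k, x j)
      = x k * ∏ j ∈ Icc (l+1) (n-1), x j := by
  rcases eq_or_lt_of_le hlk with rfl | hlk'
  · have h1 : Finset.Icc (l+1) l = ∅ := Finset.Icc_eq_empty (by omega)
    have h2 : Finset.Ico l n = insert l (Finset.Icc (l+1) (n-1)) := by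
      ext j; simp only [mem_Ico, mem_insert, mem_Icc]; omega
    have h3 : l ∉ Finset.Icc (l+1) (n-1) := by simp
    rw [h1, h2, Finset.prod_insert h3, Finset.prod_empty, mul_one]
  · have h1 : Finset.Icc (l+1) k = insert k (Finset.Icc (l+1) (k-1)) := by
      ext j; simp only [mem_Icc, mem_insert]; omega
    have h2 : k ∉ Finset.Icc (l+1) (k-1) := by simp
    have h3 : Finset.Ico k n = Finset.Icc k (n-1) := by
      ext j; simp only [mem_Ico, mem_Icc]; omega
    have h4 : Disjoint (Finset.Icc k (n-1)) (Finset.Icc (l+1) (k-1)) := by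
      simp only [Finset.disjoint_left, mem_Icc]; omega
    have h5 : Finset.Icc k (n-1) ∪ Finset.Icc (l+1) (k-1) = Finset.Icc (l+1) (n-1) := by
      ext j; simp only [mem_union, mem_Icc]; omega
    rw [h1, Finset.prod_insert h2, h3, ← mul_assoc, mul_comm _ (x k), mul_assoc,
      ← Finset.prod_union h4, h5]

lemma den_prod (y : ℤ → ℂ) (l k n : ℤ) (hlk : l ≤ k) (hkn : k ≤ n) :
    (∏ j ∈ Icc (k+1) n, y j) * (∏ j ∈ Ico l k, y j)
      = ∏ j ∈ (Icc l n).erase k, y j := by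
  have h4 : Disjoint (Finset.Icc (k+1) n) (Finset.Ico l k) := by
    simp only [Finset.disjoint_left, mem_Icc, mem_Ico]; omega
  have h5 : Finset.Icc (k+1) n ∪ Finset.Ico l k = (Finset.Icc l n).erase k := by
    ext j; simp only [mem_union, mem_Icc, mem_Ico, mem_erase]; omega
  rw [← Finset.prod_union h4, h5]

/-- Krattenthaler's matrix inversion. -/
theorem krattenthaler_inversion (a c : ℤ → ℂ)
    (hc : ∀ j k : ℤ, j ≠ k → c j ≠ c k)
    (hac : ∀ k : ℤ, a k ≠ c k) :
    ∀ n l : ℤ, l ≤ n →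
      ∑ k ∈ Finset.Icc l n, fK a c n k * gK a c k l = if n = l then 1 else 0 := by
  intro n l hln
  rcases eq_or_lt_of_le hln with rfl | hln'
  · simp only [Finset.Icc_self, Finset.sum_singleton, if_pos rfl]
    rw [fK, gK]
    have h1 : Finset.Ico l l = ∅ := by simp
    have h2 : Finset.Icc (l+1) l = ∅ := Finset.Icc_eq_empty (by omega)
    rw [h1, h2, Finset.prod_empty, Finset.prod_empty]
    simp [div_self (sub_ne_zero.mpr (hac l))]
  · rw [if_neg (by omega)]
    set s : Finset ℤ := Finset.Icc l n with hs
    have hvs : Set.InjOn c s := fun x _ y _ h => by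
      by_contra hne; exact hc x y hne h
    set P : ℂ[X] := ∏ j ∈ Finset.Icc (l+1) (n-1), (C (a j) - X) with hPdef
    have hcards : s.card = (n - l + 1).toNat := by
      rw [hs, Int.card_Icc]; congr 1; omega
    have hPdeg : P.degree < (s.card - 1 : ℕ) := by
      have h1 : P.natDegree ≤ (n - l - 1).toNat := by
        refine le_trans (Polynomial.natDegree_prod_le _ _) ?_
        have : ∀ j ∈ Finset.Icc (l+1) (n-1), (C (a j) - X).natDegree = 1 := by
          intro j _
          rw [show (C (a j) - X : ℂ[X]) = -(X - C (a j)) by ring, natDegree_neg, natDegree_X_sub_C]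
        rw [Finset.sum_congr rfl this, Finset.sum_const, smul_eq_mul, mul_one, Int.card_Icc]
        omega
      have h2 : (n - l - 1).toNat < s.card - 1 := by rw [hcards]; omega
      exact lt_of_le_of_lt Polynomial.degree_le_natDegree
        (by exact_mod_cast lt_of_le_of_lt h1 h2)
    have hterm : ∀ k ∈ s, fK a c n k * gK a c k l
        = ((a l - c l) * (-1 : ℂ)^(s.card - 1))
          * (P.eval (c k) * (∏ j ∈ s.erase k, (c k - c j))⁻¹) := by
      intro k hk
      rw [hs, Finset.mem_Icc] at hk
      obtain ⟨hlk, hkn⟩ := hk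
      have hks : k ∈ s := by rw [hs, Finset.mem_Icc]; exact ⟨hlk, hkn⟩
      have hx : a k - c k ≠ 0 := sub_ne_zero.mpr (hac k)
      have hE : P.eval (c k) = ∏ j ∈ Finset.Icc (l+1) (n-1), (a j - c k) := by
        rw [hPdef, Polynomial.eval_prod]
        exact Finset.prod_congr rfl fun j _ => by simp
      have hnum : (∏ j ∈ Finset.Ico k n, (a j - c k))
          * ((a l - c l) * ∏ j ∈ Finset.Icc (l+1) k, (a j - c k))
          = (a k - c k) * ((a l - c l) * ∏ j ∈ Finset.Icc (l+1) (n-1), (a j - c k)) := by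
        rw [← mul_assoc, mul_comm _ (a l - c l), mul_assoc,
          num_prod (fun j => a j - c k) l k n hlk hkn hln']
        ring
      have hden : (∏ j ∈ Finset.Icc (k+1) n, (c j - c k))
          * ((a k - c k) * ∏ j ∈ Finset.Ico l k, (c j - c k))
          = (a k - c k) * ∏ j ∈ s.erase k, (c j - c k) := by
        rw [← mul_assoc, mul_comm _ (a k - c k), mul_assoc,
          den_prod (fun j => c j - c k) l k n hlk hkn, hs]
      have hsign : ∏ j ∈ s.erase k, (c j - c k)
          = (-1 : ℂ)^(s.card - 1) * ∏ j ∈ s.erase k, (c k - c j) := by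
        rw [← Finset.card_erase_of_mem hks, ← Finset.prod_const (-1 : ℂ),
          ← Finset.prod_mul_distrib]
        exact Finset.prod_congr rfl fun j _ => by ring
      rw [fK, gK, div_mul_div_comm, hnum, hden, hE,
        mul_div_mul_left _ _ hx, hsign, div_eq_mul_inv, mul_inv, ← inv_pow, inv_neg_one]
      ring
    rw [Finset.sum_congr rfl hterm, ← Finset.mul_sum, pf_lemma s c hvs P hPdeg, mul_zero]
end

section
/- Let $k \geq 2$, and let $a_1, \dots, a_k$ and $b_1, \dots, b_{k-2}$ be nonzero complex numbers such that the denominators below are nonzero. Then, with $\theta(x) = 1 - x$ (the $p = 0$ theta function) and the convention $\theta(ab^{\pm}) = \theta(ab)\theta(a/b)$, $\sum_{l=1}^{k} \frac{a_l \prod_{j=1}^{k-2}(1 - a_l b_j)(1 - a_l/b_j)}{\prod_{j=1, j\neq l}^{k}(1 - a_l a_j)(1 - a_l/a_j)} = 0$. -/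
open Finset Polynomial

lemma leadingCoeff_basisDivisor {x y : ℂ} :
    (Lagrange.basisDivisor x y).leadingCoeff = (x - y)⁻¹ := by
  rw [Lagrange.basisDivisor, leadingCoeff_mul, leadingCoeff_C,
    (monic_X_sub_C y).leadingCoeff, mul_one]

lemma key_lagrange (k : ℕ) (x : ℕ → ℂ) (P : Polynomial ℂ)
    (hP : P.degree < ((k - 1 : ℕ) : WithBot ℕ)) (hinj : Set.InjOn x (Finset.range k)) :
    ∑ l ∈ Finset.range k, P.eval (x l) / ∏ j ∈ (Finset.range k).erase l, (x l - x j) = 0 := by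
  have hP' : P.degree < (#(Finset.range k) : WithBot ℕ) := by
    rw [card_range]
    exact lt_of_lt_of_le hP (by exact_mod_cast Nat.sub_le k 1)
  have heq := Lagrange.eq_interpolate hinj hP'
  have hc : P.coeff (k - 1) = 0 := coeff_eq_zero_of_degree_lt hP
  rw [heq, Lagrange.interpolate_apply, finset_sum_coeff] at hc
  rw [← hc]
  refine Finset.sum_congr rfl fun l hl => ?_
  have hdeg : (Lagrange.basis (Finset.range k) x l).degree = ((k - 1 : ℕ) : WithBot ℕ) := by
    simpa [card_range] using Lagrange.degree_basis hinj hl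
  have hnd : (Lagrange.basis (Finset.range k) x l).natDegree = k - 1 :=
    natDegree_eq_of_degree_eq_some hdeg
  have hb : (Lagrange.basis (Finset.range k) x l).coeff (k - 1) =
      ∏ j ∈ (Finset.range k).erase l, (x l - x j)⁻¹ := by
    rw [← hnd, ← leadingCoeff, Lagrange.basis, leadingCoeff_prod]
    exact Finset.prod_congr rfl fun j _ => leadingCoeff_basisDivisor
  rw [coeff_C_mul, hb, div_eq_mul_inv, ← Finset.prod_inv_distrib]

/-- The `p = 0` case of Gustafson's theta function identity. -/
theorem gustafson_identity_trig (k : ℕ) (hk : 2 ≤ k) (a b : ℕ → ℂ)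
    (ha : ∀ l < k, a l ≠ 0) (hb : ∀ j < k - 2, b j ≠ 0)
    (hden : ∀ l < k, ∀ j < k, j ≠ l → (1 - a l * a j) ≠ 0 ∧ (1 - a l / a j) ≠ 0) :
    ∑ l ∈ Finset.range k,
      a l * (∏ j ∈ Finset.range (k - 2), ((1 - a l * b j) * (1 - a l / b j))) /
        (∏ j ∈ (Finset.range k).erase l, ((1 - a l * a j) * (1 - a l / a j))) = 0 := by
  set x : ℕ → ℂ := fun l => a l + (a l)⁻¹ with hxdef
  set y : ℕ → ℂ := fun j => b j + (b j)⁻¹ with hydef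
  have hfac : ∀ u v : ℂ, u ≠ 0 → v ≠ 0 →
      (1 - u * v) * (1 - u / v) = u * ((u + u⁻¹) - (v + v⁻¹)) := by
    intro u v hu hv; field_simp; ring
  have hxne : ∀ l < k, ∀ j < k, j ≠ l → x l ≠ x j := by
    intro l hl j hj hjl hEq
    obtain ⟨h1, h2⟩ := hden l hl j hj hjl
    have h := hfac (a l) (a j) (ha l hl) (ha j hj)
    rw [show a l + (a l)⁻¹ = x l from rfl, show a j + (a j)⁻¹ = x j from rfl,
      hEq, sub_self, mul_zero] at h
    exact mul_ne_zero h1 h2 h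
  have hinj : Set.InjOn x (Finset.range k) := by
    intro l hl j hj hEq
    simp only [coe_range, Set.mem_Iio] at hl hj
    by_contra hne
    exact hxne l hl j hj (Ne.symm hne) hEq
  set P : Polynomial ℂ := ∏ j ∈ Finset.range (k - 2), (X - C (y j)) with hPdef
  have hPdeg : P.degree < ((k - 1 : ℕ) : WithBot ℕ) := by
    have : P.degree = ((k - 2 : ℕ) : WithBot ℕ) := by
      rw [hPdef, degree_prod]
      simp [degree_X_sub_C]
    rw [this]
    exact_mod_cast (by omega : k - 2 < k - 1)
  have hterm : ∀ l ∈ Finset.range k,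
      a l * (∏ j ∈ Finset.range (k - 2), ((1 - a l * b j) * (1 - a l / b j))) /
        (∏ j ∈ (Finset.range k).erase l, ((1 - a l * a j) * (1 - a l / a j)))
      = P.eval (x l) / ∏ j ∈ (Finset.range k).erase l, (x l - x j) := by
    intro l hl
    rw [mem_range] at hl
    have hal := ha l hl
    have hnum : ∏ j ∈ Finset.range (k - 2), ((1 - a l * b j) * (1 - a l / b j))
        = (a l) ^ (k - 2) * ∏ j ∈ Finset.range (k - 2), (x l - y j) := by
      rw [Finset.prod_congr rfl (fun j hj =>
        hfac (a l) (b j) hal (hb j (mem_range.mp hj))),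
        Finset.prod_mul_distrib, Finset.prod_const, card_range]
    have hden' : ∏ j ∈ (Finset.range k).erase l, ((1 - a l * a j) * (1 - a l / a j))
        = (a l) ^ (k - 1) * ∏ j ∈ (Finset.range k).erase l, (x l - x j) := by
      rw [Finset.prod_congr rfl (fun j hj =>
        hfac (a l) (a j) hal (ha j (mem_range.mp (mem_of_mem_erase hj)))),
        Finset.prod_mul_distrib, Finset.prod_const,
        card_erase_of_mem (mem_range.mpr hl), card_range]
    have hpow : a l * (a l) ^ (k - 2) = (a l) ^ (k - 1) := by
      rw [← pow_succ']
      congr 1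
      omega
    have hev : P.eval (x l) = ∏ j ∈ Finset.range (k - 2), (x l - y j) := by
      rw [hPdef, eval_prod]
      simp
    rw [hnum, hden', hev, ← mul_assoc, hpow,
      mul_div_mul_left _ _ (pow_ne_zero _ hal)]
  rw [Finset.sum_congr rfl hterm]
  exact key_lagrange k x P hPdeg hinj
end

section
/- Let $r \geq 1$, let $n_1, \dots, n_r$ be non-negative integers not all zero, set $N = n_1 + \cdots + n_r$, and let $a(1), \dots, a(N-1)$ and $c_j(k)$ ($1 \leq j \leq r$, $0 \leq k \leq n_j$) be nonzero complex numbers in generic position (so all denominators below are nonzero). With $\theta(x) = 1-x$, the following identity holds: $\sum_{k_1=0}^{n_1}\cdots\sum_{k_r=0}^{n_r} \frac{\prod_{t=1}^{N-1}\big[(1 - a(t)c_1(k_1)\cdots c_r(k_r))\prod_{j=1}^r(1 - a(t)/c_j(k_j))\big]}{\prod_{i=1}^r\prod_{t=0, t\neq k_i}^{n_i}\big[(1 - c_i(t)c_1(k_1)\cdots c_r(k_r))\prod_{j=1}^r(1 - c_i(t)/c_j(k_j))\big]} \cdot \prod_{1\leq i<j\leq r}\frac{1}{1 - c_i(k_i)/c_j(k_j)}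 \cdot \prod_{j=1}^r \frac{1}{c_j(k_j)^j} = 0$. -/
open Finset

noncomputable def ArT (r : ℕ) (a : ℕ → ℂ) (S : Fin r → Finset ℂ) (M : ℕ) (k : Fin r → ℂ) : ℂ :=
  (∏ t ∈ Finset.Icc 1 (M - 1), ((1 - a t * ∏ j, k j) * ∏ j, (1 - a t / k j))) /
    (∏ i, ∏ x ∈ (S i).erase (k i), ((1 - x * ∏ j, k j) * ∏ j, (1 - x / k j))) *
    (∏ i, ∏ j ∈ Finset.Ioi i, (1 - k i / k j)⁻¹) *
    ∏ j, ((k j) ^ (j.val + 1))⁻¹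

lemma prod_update_comp {r : ℕ} (b : Fin r → ℂ) (i₀ : Fin r) (x : ℂ) (F : Fin r → ℂ → ℂ) :
    ∏ j, F j (Function.update b i₀ x j) = F i₀ x * ∏ j ∈ univ.erase i₀, F j (b j) := by
  rw [← Finset.mul_prod_erase univ _ (mem_univ i₀), Function.update_self]
  congr 1
  exact Finset.prod_congr rfl fun j hj => by rw [Function.update_of_ne (Finset.ne_of_mem_erase hj)]

lemma erase_univ_eq {r : ℕ} (i₀ : Fin r) : (univ.erase i₀ : Finset (Fin r)) = Iio i₀ ∪ Ioi i₀ := by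
  ext j
  simp only [mem_erase, mem_univ, and_true, mem_union, mem_Iio, mem_Ioi]
  exact ne_iff_lt_or_gt

lemma ArT_base_form (r : ℕ) (S : Fin r → Finset ℂ) (a : ℕ → ℂ) (i₀ : Fin r) (b : Fin r → ℂ)
    (hbj : ∀ j, j ≠ i₀ → S j = {b j}) (x y : ℂ) (hxy : (S i₀).erase x = {y}) :
    ArT r a S 1 (Function.update b i₀ x) =
      ((1 - y * (x * ∏ j ∈ univ.erase i₀, b j)) *
          ((1 - y / x) * ∏ j ∈ univ.erase i₀, (1 - y / b j)))⁻¹ *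
      ((∏ j ∈ univ.erase i₀, (if i₀ < j then (1 - x / b j)⁻¹ else (1 - b j / x)⁻¹)) *
        (∏ i ∈ univ.erase i₀, ∏ j ∈ (Ioi i).erase i₀, (1 - b i / b j)⁻¹)) *
      ((x ^ (i₀.val + 1))⁻¹ * ∏ j ∈ univ.erase i₀, ((b j) ^ (j.val + 1))⁻¹) := by
  classical
  have hprodk : ∏ j, Function.update b i₀ x j = x * ∏ j ∈ univ.erase i₀, b j :=
    prod_update_comp b i₀ x (fun _ z => z)
  unfold ArT
  rw [show (1:ℕ) - 1 = 0 from rfl, Finset.Icc_eq_empty (by omega), Finset.prod_empty]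
  rw [hprodk]
  -- denominator
  have hD : (∏ i, ∏ w ∈ (S i).erase (Function.update b i₀ x i),
        ((1 - w * (x * ∏ j ∈ univ.erase i₀, b j)) * ∏ j, (1 - w / Function.update b i₀ x j)))
      = (1 - y * (x * ∏ j ∈ univ.erase i₀, b j)) *
          ((1 - y / x) * ∏ j ∈ univ.erase i₀, (1 - y / b j)) := by
    have h1 : ∀ i ∈ univ.erase i₀, (∏ w ∈ (S i).erase (Function.update b i₀ x i),
        ((1 - w * (x * ∏ j ∈ univ.erase i₀, b j)) * ∏ j, (1 - w / Function.update b i₀ x j)))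
        = 1 := by
      intro i hi
      rw [Function.update_of_ne (Finset.ne_of_mem_erase hi), hbj i (Finset.ne_of_mem_erase hi),
        Finset.erase_singleton, Finset.prod_empty]
    rw [← Finset.mul_prod_erase univ _ (mem_univ i₀), Finset.prod_eq_one h1, mul_one,
      Function.update_self, hxy, Finset.prod_singleton,
      prod_update_comp b i₀ x (fun _ z => 1 - y / z)]
  rw [hD]
  -- pairs
  have hP : (∏ i, ∏ j ∈ Finset.Ioi i,
        (1 - Function.update b i₀ x i / Function.update b i₀ x j)⁻¹)
      = (∏ j ∈ univ.erase i₀, (if i₀ < j then (1 - x / b j)⁻¹ else (1 - b j / x)⁻¹)) *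
        (∏ i ∈ univ.erase i₀, ∏ j ∈ (Ioi i).erase i₀, (1 - b i / b j)⁻¹) := by
    rw [← Finset.mul_prod_erase univ _ (mem_univ i₀)]
    have part1 : (∏ j ∈ Finset.Ioi i₀,
          (1 - Function.update b i₀ x i₀ / Function.update b i₀ x j)⁻¹)
        = ∏ j ∈ Ioi i₀, (1 - x / b j)⁻¹ := by
      refine Finset.prod_congr rfl fun j hj => ?_
      rw [Function.update_self, Function.update_of_ne (ne_of_gt (mem_Ioi.mp hj))]
    have part2 : (∏ i ∈ univ.erase i₀, ∏ j ∈ Finset.Ioi i,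
          (1 - Function.update b i₀ x i / Function.update b i₀ x j)⁻¹)
        = (∏ i ∈ Iio i₀, (1 - b i / x)⁻¹) *
          (∏ i ∈ univ.erase i₀, ∏ j ∈ (Ioi i).erase i₀, (1 - b i / b j)⁻¹) := by
      have step : ∀ i ∈ univ.erase i₀,
          (∏ j ∈ Finset.Ioi i, (1 - Function.update b i₀ x i / Function.update b i₀ x j)⁻¹)
          = (if i < i₀ then (1 - b i / x)⁻¹ else 1) *
            ∏ j ∈ (Ioi i).erase i₀, (1 - b i / b j)⁻¹ := by
        intro i hi
        have hi' := Finset.ne_of_mem_erase hi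
        rcases lt_or_gt_of_ne hi' with hlt | hgt
        · rw [if_pos hlt, ← Finset.mul_prod_erase (Ioi i) _ (mem_Ioi.mpr hlt),
            Function.update_of_ne hi', Function.update_self]
          congr 1
          refine Finset.prod_congr rfl fun j hj => ?_
          rw [Function.update_of_ne (Finset.ne_of_mem_erase hj)]
        · rw [if_neg (asymm hgt), one_mul,
            Finset.erase_eq_of_notMem (fun hmem => asymm hgt (mem_Ioi.mp hmem))]
          refine Finset.prod_congr rfl fun j hj => ?_
          rw [Function.update_of_ne hi',
            Function.update_of_ne (ne_of_gt (lt_trans hgt (mem_Ioi.mp hj)))]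
      rw [Finset.prod_congr rfl step, Finset.prod_mul_distrib]
      congr 1
      rw [Finset.prod_ite _ _, Finset.prod_const_one, mul_one]
      apply Finset.prod_congr _ (fun _ _ => rfl)
      ext j
      simp only [mem_filter, mem_erase, mem_univ, and_true, true_and, mem_Iio]
      exact ⟨fun h => h.2, fun h => ⟨ne_of_lt h, h⟩⟩
    rw [part1, part2]
    have hsplit : (∏ j ∈ univ.erase i₀, (if i₀ < j then (1 - x / b j)⁻¹ else (1 - b j / x)⁻¹))
        = (∏ j ∈ Iio i₀, (1 - b j / x)⁻¹) * ∏ j ∈ Ioi i₀, (1 - x / b j)⁻¹ := by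
      rw [erase_univ_eq, Finset.prod_union (by
        rw [Finset.disjoint_left]
        intro j hj hj'
        exact absurd (mem_Ioi.mp hj') (asymm (mem_Iio.mp hj)))]
      congr 1
      · exact Finset.prod_congr rfl fun j hj => by rw [if_neg (asymm (mem_Iio.mp hj))]
      · exact Finset.prod_congr rfl fun j hj => by rw [if_pos (mem_Ioi.mp hj)]
    rw [hsplit]
    ring
  rw [hP]
  -- powers
  rw [prod_update_comp b i₀ x (fun j z => (z ^ (j.val + 1))⁻¹)]
  rw [one_div]

lemma one_sub_div_ne_zero {x y : ℂ} (hy : y ≠ 0) (h : x ≠ y) : (1:ℂ) - x / y ≠ 0 := by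
  rw [sub_ne_zero]
  intro he
  exact h ((div_eq_one_iff_eq hy).mp he.symm)

lemma ArG_base (r : ℕ) (S : Fin r → Finset ℂ) (a : ℕ → ℂ)
    (hne : ∀ i, (S i).Nonempty)
    (h0 : ∀ i, ∀ x ∈ S i, x ≠ 0)
    (hcard : (∑ i, (S i).card) = 1 + r) :
    ∑ k ∈ Fintype.piFinset S, ArT r a S 1 k = 0 := by
  classical
  -- find the special row
  have hex : ∃ i₀, 2 ≤ (S i₀).card := by
    by_contra h
    push_neg at h
    have h1 : ∀ i, (S i).card = 1 := fun i => le_antisymm (by have := h i; omega) (hne i).card_pos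
    simp only [h1, Finset.sum_const, card_univ, Fintype.card_fin, smul_eq_mul, mul_one] at hcard
    omega
  obtain ⟨i₀, hi₀⟩ := hex
  have hcards : (S i₀).card = 2 ∧ ∀ j, j ≠ i₀ → (S j).card = 1 := by
    have hle : ∀ i ∈ univ, (if i = i₀ then 2 else 1) ≤ (S i).card := by
      intro i _
      split
      · next h => exact h ▸ hi₀
      · exact (hne i).card_pos
    have hsum : ∑ i : Fin r, (if i = i₀ then 2 else 1) = 1 + r := by
      have : ∀ i : Fin r, (if i = i₀ then 2 else 1) = 1 + (if i = i₀ then 1 else 0) := by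
        intro i; split <;> rfl
      simp only [this, Finset.sum_add_distrib, Finset.sum_ite_eq' univ i₀ (fun _ => 1),
        Finset.sum_const, card_univ, Fintype.card_fin, smul_eq_mul, mul_one, mem_univ, if_true]
      omega
    have key := (Finset.sum_eq_sum_iff_of_le hle).mp (by rw [hsum, hcard])
    constructor
    · have := key i₀ (mem_univ i₀); simpa using this.symm
    · intro j hj
      have := key j (mem_univ j)
      simp only [if_neg hj] at this
      exact this.symm
  obtain ⟨u, v, huv, hSuv⟩ := Finset.card_eq_two.mp hcards.1
  -- choose representatives
  choose b hb using fun j => hne j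
  have hbj : ∀ j, j ≠ i₀ → S j = {b j} := by
    intro j hj
    obtain ⟨w, hw⟩ := Finset.card_eq_one.mp (hcards.2 j hj)
    have := hb j
    rw [hw, Finset.mem_singleton] at this
    rw [hw, this]
  -- the pi-set is the image of the two-point set
  have hpi : Fintype.piFinset S = (S i₀).image (fun x => Function.update b i₀ x) := by
    ext k
    simp only [Fintype.mem_piFinset, Finset.mem_image]
    constructor
    · intro hk
      refine ⟨k i₀, hk i₀, ?_⟩
      funext j
      rcases eq_or_ne j i₀ with rfl | hj
      · rw [Function.update_self]
      · rw [Function.update_of_ne hj]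
        have := hk j
        rw [hbj j hj, Finset.mem_singleton] at this
        exact this.symm
    · rintro ⟨x, hx, rfl⟩ j
      rcases eq_or_ne j i₀ with rfl | hj
      · rwa [Function.update_self]
      · rw [Function.update_of_ne hj, hbj j hj]
        exact Finset.mem_singleton_self _
  rw [hpi, Finset.sum_image (fun x _ x' _ h => by
    have := congrFun h i₀
    rwa [Function.update_self, Function.update_self] at this)]
  rw [hSuv, Finset.sum_pair huv]
  -- nonzeroness
  have hu0 : u ≠ 0 := h0 i₀ u (hSuv ▸ Finset.mem_insert_self u {v})
  have hv0 : v ≠ 0 := h0 i₀ v (hSuv ▸ Finset.mem_insert_of_mem (Finset.mem_singleton_self v))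
  have hb0 : ∀ j ∈ univ.erase i₀, b j ≠ 0 := fun j hj => h0 j (b j) (hb j)
  -- erase facts
  have heu : (S i₀).erase u = {v} := by
    rw [hSuv, Finset.erase_insert (by simpa using huv)]
  have hev : (S i₀).erase v = {u} := by
    rw [hSuv, Finset.pair_comm, Finset.erase_insert (by simpa using huv.symm)]
  set E := (univ.erase i₀ : Finset (Fin r)) with hE
  set B := ∏ j ∈ E, b j with hB
  set Q' := ∏ i ∈ E, ∏ j ∈ (Ioi i).erase i₀, (1 - b i / b j) with hQ'
  set Pw' := ∏ j ∈ E, (b j) ^ (j.val + 1) with hPw'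
  set m := i₀.val with hm
  -- the single-inverse form
  have hT : ∀ x y : ℂ, (S i₀).erase x = {y} →
      ArT r a S 1 (Function.update b i₀ x) =
      ((1 - y * (x * B)) * ((1 - y / x) * ∏ j ∈ E, (1 - y / b j)) *
        ((∏ j ∈ E, (if i₀ < j then (1 - x / b j) else (1 - b j / x))) * Q') *
        (x ^ (m + 1) * Pw'))⁻¹ := by
    intro x y hxy
    rw [ArT_base_form r S a i₀ b hbj x y hxy]
    rw [show (∏ j ∈ E, (if i₀ < j then (1 - x / b j)⁻¹ else (1 - b j / x)⁻¹))
        = (∏ j ∈ E, (if i₀ < j then (1 - x / b j) else (1 - b j / x)))⁻¹ by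
      rw [← Finset.prod_inv_distrib]
      exact Finset.prod_congr rfl fun j _ => (apply_ite Inv.inv _ _ _).symm]
    rw [show (∏ i ∈ E, ∏ j ∈ (Ioi i).erase i₀, (1 - b i / b j)⁻¹) = Q'⁻¹ by
      rw [hQ', ← Finset.prod_inv_distrib]
      exact Finset.prod_congr rfl fun i _ => Finset.prod_inv_distrib _]
    rw [show (∏ j ∈ E, ((b j) ^ (j.val + 1))⁻¹) = Pw'⁻¹ by
      rw [hPw']
      exact Finset.prod_inv_distrib _]
    simp only [mul_inv]
    rw [hB, hE, hm]
  rw [hT u v heu, hT v u hev]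
  -- the inverse-free cancellation
  have hcomb : (∏ j ∈ E, (1 - v / b j)) * (∏ j ∈ E, (if i₀ < j then (1 - u / b j) else (1 - b j / u)))
      = (v / u) ^ m * ((∏ j ∈ E, (1 - u / b j)) *
          (∏ j ∈ E, (if i₀ < j then (1 - v / b j) else (1 - b j / v)))) := by
    rw [← Finset.prod_mul_distrib, ← Finset.prod_mul_distrib]
    rw [Finset.prod_congr rfl (g := fun j => (if i₀ < j then (1:ℂ) else v / u) *
        ((1 - u / b j) * (if i₀ < j then (1 - v / b j) else (1 - b j / v))))
      (fun j hj => by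
        have hbj0 := hb0 j hj
        by_cases h : i₀ < j
        · simp only [if_pos h]; ring
        · simp only [if_neg h]
          field_simp
          ring)]
    rw [Finset.prod_mul_distrib]
    congr 1
    rw [Finset.prod_ite _ _, Finset.prod_const_one, Finset.prod_const, one_mul]
    congr 1
    rw [show E.filter (fun j => ¬ i₀ < j) = Iio i₀ by
      ext j
      constructor
      · intro hjf
        have h1 := Finset.mem_filter.mp hjf
        exact Finset.mem_Iio.mpr
          (lt_of_le_of_ne (not_lt.mp h1.2) (Finset.ne_of_mem_erase h1.1))
      · intro hj
        have hlt := Finset.mem_Iio.mp hj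
        exact Finset.mem_filter.mpr
          ⟨Finset.mem_erase.mpr ⟨ne_of_lt hlt, Finset.mem_univ j⟩, not_lt.mpr (le_of_lt hlt)⟩]
    exact Fin.card_Iio i₀
  have hscal : (1 - v / u) * u ^ (m + 1) * (v / u) ^ m = -((1 - u / v) * v ^ (m + 1)) := by
    have hum : u ^ m * u⁻¹ ^ m = 1 := by rw [← mul_pow, mul_inv_cancel₀ hu0, one_pow]
    field_simp
    linear_combination (v * v ^ m * u ^ 2 - v ^ 2 * v ^ m * u) * hum
  have hG : (1 - u * (v * B)) = (1 - v * (u * B)) := by ring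
  have hkey : (1 - v * (u * B)) * ((1 - v / u) * ∏ j ∈ E, (1 - v / b j)) *
        ((∏ j ∈ E, (if i₀ < j then (1 - u / b j) else (1 - b j / u))) * Q') *
        (u ^ (m + 1) * Pw')
      = -((1 - u * (v * B)) * ((1 - u / v) * ∏ j ∈ E, (1 - u / b j)) *
        ((∏ j ∈ E, (if i₀ < j then (1 - v / b j) else (1 - b j / v))) * Q') *
        (v ^ (m + 1) * Pw')) := by
    rw [hG]
    linear_combination ((1 - v * (u * B)) * Q' * Pw' * (1 - v / u) * u ^ (m + 1)) * hcomb +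
      ((1 - v * (u * B)) * Q' * Pw' * (∏ j ∈ E, (1 - u / b j)) *
        (∏ j ∈ E, (if i₀ < j then (1 - v / b j) else (1 - b j / v)))) * hscal
  rw [hkey, inv_neg]
  ring

noncomputable def ArD (r : ℕ) (S : Fin r → Finset ℂ) (k : Fin r → ℂ) : ℂ :=
  ∏ i, ∏ x ∈ (S i).erase (k i), ((1 - x * ∏ j, k j) * ∏ j, (1 - x / k j))

noncomputable def ArR (r : ℕ) (a : ℕ → ℂ) (S : Fin r → Finset ℂ) (M : ℕ) (k : Fin r → ℂ) : ℂ :=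
  (∏ t ∈ Finset.Icc 2 M, ((1 - a t * ∏ j, k j) * ∏ j, (1 - a t / k j))) / ArD r S k *
    (∏ i, ∏ j ∈ Finset.Ioi i, (1 - k i / k j)⁻¹) * ∏ j, ((k j) ^ (j.val + 1))⁻¹

lemma ArT_succ (r : ℕ) (a : ℕ → ℂ) (S : Fin r → Finset ℂ) (M : ℕ) (k : Fin r → ℂ)
    (hM : 1 ≤ M) :
    ArT r a S (M + 1) k
      = ArR r a S M k * ((1 - (∏ j, k j) * a 1) * ∏ j, (1 - (k j)⁻¹ * a 1)) := by
  unfold ArT ArR ArD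
  rw [show M + 1 - 1 = M from rfl]
  have h1M : (1:ℕ) ∈ Finset.Icc 1 M := by simp [hM]
  rw [← Finset.mul_prod_erase _ _ h1M]
  rw [show (Finset.Icc 1 M).erase 1 = Finset.Icc 2 M by
    ext t; simp only [Finset.mem_erase, Finset.mem_Icc]; omega]
  have hdp : ∏ j, (1 - a 1 / k j) = ∏ j, (1 - (k j)⁻¹ * a 1) :=
    Finset.prod_congr rfl fun j _ => by rw [div_eq_mul_inv, mul_comm]
  rw [hdp]
  ring

lemma ArT_shift (r : ℕ) (a : ℕ → ℂ) (S : Fin r → Finset ℂ) (M : ℕ) (k : Fin r → ℂ)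
    (hM : 1 ≤ M) :
    ArT r (fun t => a (t + 1)) S M k = ArR r a S M k := by
  unfold ArT ArR
  congr 1
  congr 1
  congr 1
  rw [show Finset.Icc 2 M = (Finset.Icc 1 (M-1)).map (addRightEmbedding 1) by
    rw [Finset.map_add_right_Icc]
    congr 1
    omega]
  rw [Finset.prod_map]
  rfl

lemma ArD_split (r : ℕ) (S : Fin r → Finset ℂ) (k : Fin r → ℂ) (i₁ : Fin r) :
    ArD r S k = (∏ x ∈ (S i₁).erase (k i₁), ((1 - x * ∏ j, k j) * ∏ j, (1 - x / k j))) *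
      ∏ i ∈ univ.erase i₁, ∏ x ∈ (S i).erase (k i),
        ((1 - x * ∏ j, k j) * ∏ j, (1 - x / k j)) :=
  (Finset.mul_prod_erase univ _ (mem_univ i₁)).symm

lemma ArD_factor (r : ℕ) (S : Fin r → Finset ℂ) (i₁ : Fin r) (z : ℂ) (hzS : z ∈ S i₁)
    (k : Fin r → ℂ) (hki : k i₁ ≠ z) :
    ArD r S k = ((1 - z * ∏ j, k j) * ∏ j, (1 - z / k j)) *
      ArD r (Function.update S i₁ ((S i₁).erase z)) k := by
  rw [ArD_split r S k i₁, ArD_split r (Function.update S i₁ ((S i₁).erase z)) k i₁,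
    Function.update_self]
  have hzmem : z ∈ (S i₁).erase (k i₁) := Finset.mem_erase.mpr ⟨Ne.symm hki, hzS⟩
  rw [show ((S i₁).erase z).erase (k i₁) = ((S i₁).erase (k i₁)).erase z from
    Finset.erase_right_comm]
  rw [← Finset.mul_prod_erase ((S i₁).erase (k i₁)) _ hzmem]
  rw [Finset.prod_congr rfl (fun i hi => by
    rw [Function.update_of_ne (Finset.ne_of_mem_erase hi)] :
    ∀ i ∈ univ.erase i₁, (∏ x ∈ ((Function.update S i₁ ((S i₁).erase z)) i).erase (k i),
      ((1 - x * ∏ j, k j) * ∏ j, (1 - x / k j)))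
      = ∏ x ∈ (S i).erase (k i), ((1 - x * ∏ j, k j) * ∏ j, (1 - x / k j)))]
  ring

theorem ArG : ∀ M : ℕ, 1 ≤ M → ∀ (r : ℕ) (S : Fin r → Finset ℂ) (a : ℕ → ℂ),
    (∀ i, (S i).Nonempty) →
    (∀ i, ∀ x ∈ S i, x ≠ 0) →
    (∀ i j, i ≠ j → ∀ x ∈ S i, ∀ y ∈ S j, x ≠ y) →
    (∀ i, ∀ x ∈ S i, ∀ k : Fin r → ℂ, (∀ j, k j ∈ S j) → k i ≠ x → 1 - x * ∏ j, k j ≠ 0) →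
    ((∑ i, (S i).card) = M + r) →
    ∑ k ∈ Fintype.piFinset S, ArT r a S M k = 0 := by
  intro M hM1
  induction M, hM1 using Nat.le_induction with
  | base =>
    intro r S a hne h0 _ _ hcard
    exact ArG_base r S a hne h0 hcard
  | succ M hM IH =>
    intro r S a hne h0 hdisj hprod hcard
    classical
    set P : Polynomial ℂ := ∑ k ∈ Fintype.piFinset S, Polynomial.C (ArR r a S M k) *
      ((1 - Polynomial.C (∏ j, k j) * Polynomial.X) *
        ∏ j, (1 - Polynomial.C ((k j)⁻¹) * Polynomial.X)) with hP
    have heval : ∀ z : ℂ, P.eval z = ∑ k ∈ Fintype.piFinset S,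
        ArR r a S M k * ((1 - (∏ j, k j) * z) * ∏ j, (1 - (k j)⁻¹ * z)) := by
      intro z
      rw [hP, Polynomial.eval_finset_sum]
      refine Finset.sum_congr rfl fun k _ => ?_
      simp [Polynomial.eval_prod]
    -- degree bound
    have hlin : ∀ c : ℂ, (1 - Polynomial.C c * Polynomial.X).natDegree ≤ 1 := by
      intro c
      refine le_trans (Polynomial.natDegree_sub_le _ _) ?_
      simp only [Polynomial.natDegree_one, max_le_iff]
      exact ⟨Nat.zero_le 1, le_trans (Polynomial.natDegree_mul_le)
        (by simp [Polynomial.natDegree_C, Polynomial.natDegree_X])⟩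
    have hdeg : P.natDegree ≤ r + 1 := by
      rw [hP]
      refine Polynomial.natDegree_sum_le_of_forall_le _ _ fun k _ => ?_
      refine le_trans (Polynomial.natDegree_mul_le) ?_
      rw [Polynomial.natDegree_C, zero_add]
      refine le_trans (Polynomial.natDegree_mul_le) ?_
      have h2 : (∏ j : Fin r, (1 - Polynomial.C ((k j)⁻¹) * Polynomial.X)).natDegree ≤ r := by
        refine le_trans (Polynomial.natDegree_prod_le _ _) ?_
        refine le_trans (Finset.sum_le_sum (fun j _ => hlin ((k j)⁻¹))) ?_
        simp
      have := hlin (∏ j, k j)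
      omega
    -- root set
    have hdisjZ : ∀ x ∈ (univ : Finset (Fin r)), ∀ y ∈ univ, x ≠ y → Disjoint (S x) (S y) := by
      intro i _ j _ hij
      rw [Finset.disjoint_left]
      intro x hx hx'
      exact hdisj i j hij x hx x hx' rfl
    have hZcard : (univ.biUnion S).card = M + 1 + r := by
      rw [Finset.card_biUnion hdisjZ, hcard]
    have hroots : ∀ z ∈ univ.biUnion S, P.eval z = 0 := by
      intro z hz
      obtain ⟨i₁, -, hzS⟩ := Finset.mem_biUnion.mp hz
      have hz0 : z ≠ 0 := h0 i₁ z hzS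
      rw [heval z]
      rw [← Finset.sum_filter_add_sum_filter_not (Fintype.piFinset S) (fun k => k i₁ = z)]
      have hfirst : ∑ k ∈ (Fintype.piFinset S).filter (fun k => k i₁ = z),
          ArR r a S M k * ((1 - (∏ j, k j) * z) * ∏ j, (1 - (k j)⁻¹ * z)) = 0 := by
        refine Finset.sum_eq_zero fun k hk => ?_
        obtain ⟨-, hki⟩ := Finset.mem_filter.mp hk
        have hzero : ∏ j, (1 - (k j)⁻¹ * z) = 0 :=
          Finset.prod_eq_zero (Finset.mem_univ i₁) (by rw [hki, inv_mul_cancel₀ hz0, sub_self])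
        rw [hzero, mul_zero, mul_zero]
      rw [hfirst, zero_add]
      set S' := Function.update S i₁ ((S i₁).erase z) with hS'
      have hsub : ∀ i, ∀ x ∈ S' i, x ∈ S i := by
        intro i x hx
        rcases eq_or_ne i i₁ with rfl | hi
        · rw [hS', Function.update_self] at hx
          exact Finset.mem_of_mem_erase hx
        · rwa [hS', Function.update_of_ne hi] at hx
      have hfil : (Fintype.piFinset S).filter (fun k => ¬ k i₁ = z) = Fintype.piFinset S' := by
        ext k
        simp only [Finset.mem_filter, Fintype.mem_piFinset]
        constructor
        · rintro ⟨hk, hne'⟩ j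
          rcases eq_or_ne j i₁ with rfl | hj
          · rw [hS', Function.update_self]
            exact Finset.mem_erase.mpr ⟨hne', hk j⟩
          · rw [hS', Function.update_of_ne hj]
            exact hk j
        · intro hk
          refine ⟨fun j => hsub j (k j) (hk j), ?_⟩
          have := hk i₁
          rw [hS', Function.update_self, Finset.mem_erase] at this
          exact this.1
      rw [hfil]
      have hterm : ∀ k ∈ Fintype.piFinset S',
          ArR r a S M k * ((1 - (∏ j, k j) * z) * ∏ j, (1 - (k j)⁻¹ * z))
            = ArT r (fun t => a (t + 1)) S' M k := by
        intro k hk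
        have hkS : ∀ j, k j ∈ S j := fun j => hsub j (k j) ((Fintype.mem_piFinset).mp hk j)
        have hki : k i₁ ≠ z := by
          have := (Fintype.mem_piFinset).mp hk i₁
          rw [hS', Function.update_self, Finset.mem_erase] at this
          exact this.1
        have hk0 : ∀ j, k j ≠ 0 := fun j => h0 j (k j) (hkS j)
        have hfac1 : (1 - z * ∏ j, k j) ≠ 0 := hprod i₁ z hzS k hkS hki
        have hfac2 : (∏ j, (1 - z / k j)) ≠ 0 := by
          rw [Finset.prod_ne_zero_iff]
          intro j _
          rcases eq_or_ne j i₁ with rfl | hj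
          · exact one_sub_div_ne_zero (hk0 j) (Ne.symm hki)
          · exact one_sub_div_ne_zero (hk0 j)
              (hdisj i₁ j (Ne.symm hj) z hzS (k j) (hkS j))
        have hfacne : ((1 - z * ∏ j, k j) * ∏ j, (1 - z / k j)) ≠ 0 := mul_ne_zero hfac1 hfac2
        rw [ArT_shift r a S' M k hM]
        have hzfac : (1 - (∏ j, k j) * z) * ∏ j, (1 - (k j)⁻¹ * z)
            = (1 - z * ∏ j, k j) * ∏ j, (1 - z / k j) := by
          rw [mul_comm (∏ j, k j) z]
          congr 1
          exact Finset.prod_congr rfl fun j _ => by rw [div_eq_mul_inv, mul_comm]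
        rw [hzfac]
        unfold ArR
        rw [ArD_factor r S i₁ z hzS k hki, ← hS']
        have hcancel : (∏ t ∈ Finset.Icc 2 M, ((1 - a t * ∏ j, k j) * ∏ j, (1 - a t / k j))) /
            (((1 - z * ∏ j, k j) * ∏ j, (1 - z / k j)) * ArD r S' k) *
            ((1 - z * ∏ j, k j) * ∏ j, (1 - z / k j))
            = (∏ t ∈ Finset.Icc 2 M, ((1 - a t * ∏ j, k j) * ∏ j, (1 - a t / k j))) /
              ArD r S' k := by
          rw [div_mul_eq_mul_div, mul_comm (∏ t ∈ Finset.Icc 2 M,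
            ((1 - a t * ∏ j, k j) * ∏ j, (1 - a t / k j)))]
          exact mul_div_mul_left _ _ hfacne
        linear_combination ((∏ i, ∏ j ∈ Finset.Ioi i, (1 - k i / k j)⁻¹) *
          ∏ j, ((k j) ^ (j.val + 1))⁻¹) * hcancel
      rw [Finset.sum_congr rfl hterm]
      by_cases hc1 : (S i₁).card ≤ 1
      · have hempty : Fintype.piFinset S' = ∅ := by
          apply Finset.eq_empty_of_forall_notMem
          intro k hk
          have hmem := (Fintype.mem_piFinset).mp hk i₁
          rw [hS', Function.update_self] at hmem
          have hcz : ((S i₁).erase z).card = 0 := by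
            have := Finset.card_erase_of_mem hzS
            have := (hne i₁).card_pos
            omega
          rw [Finset.card_eq_zero.mp hcz] at hmem
          exact absurd hmem (Finset.notMem_empty _)
        rw [hempty, Finset.sum_empty]
      · push_neg at hc1
        refine IH r S' (fun t => a (t + 1)) ?_ ?_ ?_ ?_ ?_
        · intro i
          rcases eq_or_ne i i₁ with rfl | hi
          · rw [hS', Function.update_self]
            rw [← Finset.card_pos, Finset.card_erase_of_mem hzS]
            omega
          · rw [hS', Function.update_of_ne hi]
            exact hne i
        · exact fun i x hx => h0 i x (hsub i x hx)
        · exact fun i j hij x hx y hy => hdisj i j hij x (hsub i x hx) y (hsub j y hy)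
        · exact fun i x hx k hkmem hki =>
            hprod i x (hsub i x hx) k (fun j => hsub j (k j) (hkmem j)) hki
        · have h1 : ∑ i, (S' i).card
              = ((S i₁).erase z).card + ∑ i ∈ univ.erase i₁, (S i).card := by
            rw [← Finset.add_sum_erase univ (fun i => (S' i).card) (mem_univ i₁)]
            congr 1
            · rw [hS', Function.update_self]
            · refine Finset.sum_congr rfl fun i hi => ?_
              rw [hS', Function.update_of_ne (Finset.ne_of_mem_erase hi)]
          have h2 : ∑ i : Fin r, (S i).card
              = (S i₁).card + ∑ i ∈ univ.erase i₁, (S i).card :=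
            (Finset.add_sum_erase univ (fun i => (S i).card) (mem_univ i₁)).symm
          have h3 := Finset.card_erase_of_mem hzS
          omega
    have hP0 : P = 0 :=
      Polynomial.eq_zero_of_natDegree_lt_card_of_eval_eq_zero' P (univ.biUnion S) hroots
        (by rw [hZcard]; omega)
    have hLHS : ∑ k ∈ Fintype.piFinset S, ArT r a S (M + 1) k = P.eval (a 1) := by
      rw [heval]
      exact Finset.sum_congr rfl fun k _ => ArT_succ r a S M k hM
    rw [hLHS, hP0, Polynomial.eval_zero]

/-- The trigonometric (p = 0) case of the key vanishing lemma behind the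
elliptic `A_r` matrix inversion. -/
theorem Ar_vanishing_trig (r : ℕ) (hr : 1 ≤ r) (n : Fin r → ℕ)
    (hn : ∃ i, n i ≠ 0) (a : ℕ → ℂ) (c : Fin r → ℕ → ℂ)
    (hc : ∀ j t, c j t ≠ 0)
    (hden1 : ∀ k : Fin r → ℕ, (∀ i, k i ≤ n i) → ∀ i : Fin r, ∀ t ≤ n i, t ≠ k i →
      (1 - c i t * ∏ j, c j (k j)) ≠ 0 ∧ ∀ j, (1 - c i t / c j (k j)) ≠ 0)
    (hden2 : ∀ k : Fin r → ℕ, (∀ i, k i ≤ n i) → ∀ i j : Fin r, i < j →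
      (1 - c i (k i) / c j (k j)) ≠ 0) :
    ∑ k ∈ Fintype.piFinset (fun i => Finset.Iic (n i)),
      ((∏ t ∈ Finset.Icc 1 ((∑ i, n i) - 1),
          ((1 - a t * ∏ j, c j (k j)) * ∏ j, (1 - a t / c j (k j)))) /
        (∏ i, ∏ t ∈ (Finset.Iic (n i)).erase (k i),
          ((1 - c i t * ∏ j, c j (k j)) * ∏ j, (1 - c i t / c j (k j)))) *
        (∏ i, ∏ j ∈ Finset.Ioi i, (1 - c i (k i) / c j (k j))⁻¹) *
        ∏ j, (c j (k j) ^ (j.val + 1))⁻¹) = 0 := by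
  classical
  set M := ∑ i, n i with hMdef
  set S : Fin r → Finset ℂ := fun i => (Finset.Iic (n i)).image (c i) with hSdef
  -- injectivity on rows
  have hinj : ∀ i, ∀ t ∈ Finset.Iic (n i), ∀ s ∈ Finset.Iic (n i), c i t = c i s → t = s := by
    intro i t ht s hs heq
    by_contra hts
    have hk : ∀ j, (fun j => if j = i then s else 0) j ≤ n j := by
      intro j
      dsimp only
      split
      · next h => rw [h]; exact Finset.mem_Iic.mp hs
      · exact Nat.zero_le _
    obtain ⟨-, hall⟩ := hden1 _ hk i t (Finset.mem_Iic.mp ht) (by simpa using hts)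
    have h5 := hall i
    rw [if_pos (rfl : i = i), heq, div_self (hc i s), sub_self] at h5
    exact h5 rfl
  -- cross-row distinctness
  have hcross : ∀ i j : Fin r, i ≠ j → ∀ t ≤ n i, ∀ s ≤ n j, c i t ≠ c j s := by
    intro i j hij t ht s hs
    rcases lt_or_gt_of_ne hij with hlt | hgt
    · have hk : ∀ l, (fun l => if l = i then t else if l = j then s else 0) l ≤ n l := by
        intro l
        dsimp only
        split
        · next h => rw [h]; exact ht
        · split
          · next h => rw [h]; exact hs
          · exact Nat.zero_le _
      have h2 := hden2 _ hk i j hlt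
      rw [if_pos (rfl : i = i), if_neg (Ne.symm hij), if_pos (rfl : j = j)] at h2
      intro heq
      rw [heq, div_self (hc j s), sub_self] at h2
      exact h2 rfl
    · have hk : ∀ l, (fun l => if l = j then s else if l = i then t else 0) l ≤ n l := by
        intro l
        dsimp only
        split
        · next h => rw [h]; exact hs
        · split
          · next h => rw [h]; exact ht
          · exact Nat.zero_le _
      have h2 := hden2 _ hk j i hgt
      rw [if_pos (rfl : j = j), if_neg hij, if_pos (rfl : i = i)] at h2
      intro heq
      rw [← heq, div_self (hc i t), sub_self] at h2
      exact h2 rfl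
  -- transfer of the sum
  have htrans : ∑ k ∈ Fintype.piFinset (fun i => Finset.Iic (n i)),
      ((∏ t ∈ Finset.Icc 1 (M - 1),
          ((1 - a t * ∏ j, c j (k j)) * ∏ j, (1 - a t / c j (k j)))) /
        (∏ i, ∏ t ∈ (Finset.Iic (n i)).erase (k i),
          ((1 - c i t * ∏ j, c j (k j)) * ∏ j, (1 - c i t / c j (k j)))) *
        (∏ i, ∏ j ∈ Finset.Ioi i, (1 - c i (k i) / c j (k j))⁻¹) *
        ∏ j, (c j (k j) ^ (j.val + 1))⁻¹)
      = ∑ k ∈ Fintype.piFinset S, ArT r a S M k := by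
    refine Finset.sum_bij (fun k _ => fun j => c j (k j)) ?_ ?_ ?_ ?_
    · intro k hk
      rw [Fintype.mem_piFinset]
      intro j
      exact Finset.mem_image_of_mem (c j) ((Fintype.mem_piFinset.mp hk) j)
    · intro k hk k' hk' heq
      funext j
      exact hinj j (k j) ((Fintype.mem_piFinset.mp hk) j) (k' j)
        ((Fintype.mem_piFinset.mp hk') j) (congrFun heq j)
    · intro k' hk'
      have hmem := Fintype.mem_piFinset.mp hk'
      choose m hm hme using fun j => Finset.mem_image.mp (hmem j)
      exact ⟨m, Fintype.mem_piFinset.mpr hm, funext fun j => hme j⟩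
    · intro k hk
      have hkmem := Fintype.mem_piFinset.mp hk
      unfold ArT
      congr 1
      congr 1
      congr 1
      refine Finset.prod_congr rfl fun i _ => ?_
      have himg : (S i).erase (c i (k i)) = ((Finset.Iic (n i)).erase (k i)).image (c i) := by
        ext y
        simp only [Finset.mem_erase, Finset.mem_image, hSdef, Finset.mem_Iic]
        constructor
        · rintro ⟨hy, t, ht, rfl⟩
          exact ⟨t, ⟨fun h => hy (h ▸ rfl), ht⟩, rfl⟩
        · rintro ⟨t, ⟨htk, ht⟩, rfl⟩
          refine ⟨fun h => htk ?_, t, ht, rfl⟩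
          exact hinj i t (Finset.mem_Iic.mpr ht) (k i) (hkmem i) h
      rw [himg]
      rw [Finset.prod_image (fun t ht s hs heq => hinj i t
        (Finset.mem_of_mem_erase ht) s (Finset.mem_of_mem_erase hs) heq)]
  rw [htrans]
  -- apply the generalized vanishing theorem
  have hM1 : 1 ≤ M := by
    obtain ⟨i, hi⟩ := hn
    have : n i ≤ M := Finset.single_le_sum (f := n) (fun _ _ => Nat.zero_le _) (mem_univ i)
    omega
  refine ArG M hM1 r S a ?_ ?_ ?_ ?_ ?_
  · intro i
    exact ((Finset.nonempty_Iic).image (c i))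
  · intro i x hx
    obtain ⟨t, -, rfl⟩ := Finset.mem_image.mp hx
    exact hc i t
  · intro i j hij x hx y hy
    obtain ⟨t, ht, rfl⟩ := Finset.mem_image.mp hx
    obtain ⟨s, hs, rfl⟩ := Finset.mem_image.mp hy
    exact hcross i j hij t (Finset.mem_Iic.mp ht) s (Finset.mem_Iic.mp hs)
  · intro i x hx k hkmem hki
    obtain ⟨t, ht, rfl⟩ := Finset.mem_image.mp hx
    choose m hm hme using fun j => Finset.mem_image.mp (hkmem j)
    have hts : t ≠ m i := by
      intro h
      exact hki (by rw [← hme i, ← h])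
    have hmle : ∀ j, m j ≤ n j := fun j => Finset.mem_Iic.mp (hm j)
    have := (hden1 m hmle i t (Finset.mem_Iic.mp ht) hts).1
    have hpe : ∏ j, k j = ∏ j, c j (m j) :=
      Finset.prod_congr rfl fun j _ => (hme j).symm
    rwa [hpe]
  · have hcardi : ∀ i, (S i).card = n i + 1 := by
      intro i
      rw [hSdef]
      rw [Finset.card_image_of_injOn (fun t ht s hs heq => hinj i t ht s hs heq)]
      simp [Nat.card_Iic]
    simp only [hcardi, Finset.sum_add_distrib, Finset.sum_const, card_univ,
      Fintype.card_fin, smul_eq_mul, mul_one, hMdef]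
end
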